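/- For 0 < μ ≤ 1, λ > 0, s > λ^{1/μ}, and every nonnegative integer k, the Laplace transform of t ↦ t^{μk + μ − 1} E_{μ,μ}^{(k)}(−λ t^μ) equals k! s^{0}/(s^μ + λ)^{k+1}, i.e., ∫_0^∞ e^{−st} t^{μk+μ−1} E_{μ,μ}^{(k)}(−λ t^μ) dt = k!/(s^μ + λ)^{k+1}. -/

import Mathlib

open MeasureTheory

/-- The two-parameter Mittag-Leffler function as a function of `z`. -/
noncomputable def mittagLefflerFun (α β : ℝ) : ℝ → ℝ :=
  fun z => ∑' j : ℕ, z ^ j / Real.Gamma (α * j + β)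

open Real Filter Set

namespace MLaux

/-- coefficient of the `k`-th derivative series -/
noncomputable def c (mu : ℝ) (k m : ℕ) : ℝ :=
  ((m + k).descFactorial k : ℝ) / Real.Gamma (mu * (m + k) + mu)

lemma arg_pos {mu : ℝ} (hmu0 : 0 < mu) (k m : ℕ) : 0 < mu * (m + k) + mu := by
  have : (0:ℝ) ≤ (m + k : ℕ) := Nat.cast_nonneg _
  nlinarith

lemma descF_pos (k m : ℕ) : (0:ℝ) < ((m + k).descFactorial k : ℝ) := by
  have h : (m + k).descFactorial k ≠ 0 := by
    rw [Ne, Nat.descFactorial_eq_zero_iff_lt]; omega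
  exact_mod_cast Nat.pos_of_ne_zero h

lemma c_pos {mu : ℝ} (hmu0 : 0 < mu) (k m : ℕ) : 0 < c mu k m := by
  apply div_pos
  · exact descF_pos k m
  · exact Real.Gamma_pos_of_pos (arg_pos hmu0 k m)

lemma gautschi {mu : ℝ} (hmu0 : 0 < mu) (hmu1 : mu ≤ 1) {x : ℝ} (hx : 0 < x) :
    x * Real.Gamma x ≤ Real.Gamma (x + mu) * (x + mu) ^ (1 - mu) := by
  have h1 : (0:ℝ) < x + mu := by linarith
  have h2 : (0:ℝ) < x + 1 + mu := by linarith
  have hΓ1 : 0 < Real.Gamma (x + mu) := Real.Gamma_pos_of_pos h1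
  have hc := Real.convexOn_log_Gamma.2 (Set.mem_Ioi.2 h1) (Set.mem_Ioi.2 h2) hmu0.le
    (by linarith : (0:ℝ) ≤ 1 - mu) (by ring)
  have hpt : mu • (x + mu) + (1 - mu) • (x + 1 + mu) = x + 1 := by
    simp only [smul_eq_mul]; ring
  rw [hpt] at hc
  have hΓadd : Real.Gamma (x + 1 + mu) = (x + mu) * Real.Gamma (x + mu) := by
    rw [show x + 1 + mu = (x + mu) + 1 by ring, Real.Gamma_add_one h1.ne']
  have hc' : Real.log (Real.Gamma (x + 1)) ≤
      Real.log (Real.Gamma (x + mu) * (x + mu) ^ (1 - mu)) := by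
    have := hc
    simp only [Function.comp, smul_eq_mul, hΓadd] at this
    rw [Real.log_mul h1.ne' hΓ1.ne'] at this
    rw [Real.log_mul hΓ1.ne' (Real.rpow_pos_of_pos h1 _).ne', Real.log_rpow h1]
    nlinarith [this]
  have hΓx1 : 0 < Real.Gamma (x + 1) := Real.Gamma_pos_of_pos (by linarith)
  have := (Real.log_le_log_iff hΓx1 (by positivity)).1 hc'
  rwa [Real.Gamma_add_one hx.ne'] at this

lemma c_succ (mu : ℝ) (k m : ℕ) : ((m:ℝ) + 1) * c mu k (m + 1) = c mu (k + 1) m := by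
  simp only [c]
  have hn : (m + (k + 1)).descFactorial (k + 1) = (m + 1) * ((m + 1) + k).descFactorial k := by
    rw [show m + (k + 1) = (m + k + 1) by ring, Nat.descFactorial_succ,
      show m + k + 1 - k = m + 1 by omega, show m + 1 + k = m + k + 1 by ring]
  rw [hn]
  have harg : mu * (↑(m + 1) + ↑k) + mu = mu * (↑m + ↑(k + 1)) + mu := by push_cast; ring
  rw [harg]
  push_cast
  ring

lemma summable_c {mu : ℝ} (hmu0 : 0 < mu) (hmu1 : mu ≤ 1) (k : ℕ) (r : ℝ) :
    Summable (fun m => c mu k m * r ^ m) := by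
  apply summable_of_ratio_norm_eventually_le (r := 1/2) (by norm_num)
  -- the auxiliary quantity
  set y : ℕ → ℝ := fun m => mu * (m + k) + mu with hy_def
  have hy_pos : ∀ m, 0 < y m := fun m => arg_pos hmu0 k m
  have hytop : Tendsto y atTop atTop := by
    apply tendsto_atTop_add_const_right
    apply Tendsto.const_mul_atTop hmu0
    exact tendsto_atTop_add_const_right _ _ tendsto_natCast_atTop_atTop
  set Kr : ℝ := (k + 1 : ℝ) * |r| with hKr
  have hKr0 : 0 ≤ Kr := by positivity
  have hphi : Tendsto (fun z : ℝ => (z + mu) ^ (1 - mu) / z * Kr) atTop (nhds 0) := by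
    have h1 : Tendsto (fun z : ℝ => (z + mu) ^ (-mu)) atTop (nhds 0) :=
      (tendsto_rpow_neg_atTop hmu0).comp (tendsto_atTop_add_const_right _ _ tendsto_id)
    have h2 : Tendsto (fun z : ℝ => (z + mu) / z) atTop (nhds 1) := by
      have : Tendsto (fun z : ℝ => 1 + mu / z) atTop (nhds (1 + 0)) :=
        tendsto_const_nhds.add (tendsto_const_nhds.div_atTop tendsto_id)
      rw [add_zero] at this
      apply this.congr'
      filter_upwards [eventually_gt_atTop (0:ℝ)] with z hz
      field_simp
    have h3 : Tendsto (fun z : ℝ => (z + mu) ^ (-mu) * ((z + mu) / z) * Kr) atTop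
        (nhds (0 * 1 * Kr)) := (h1.mul h2).mul_const Kr
    rw [zero_mul, zero_mul] at h3
    apply h3.congr'
    filter_upwards [eventually_gt_atTop (0:ℝ)] with z hz
    have hzmu : (0:ℝ) < z + mu := by linarith
    rw [show (1 : ℝ) - mu = 1 + (-mu) by ring, Real.rpow_add hzmu, Real.rpow_one]
    ring
  have hev : ∀ᶠ m in atTop, (y m + mu) ^ (1 - mu) / y m * Kr ≤ 1/2 :=
    (hphi.comp hytop).eventually_le_const (by norm_num)
  filter_upwards [hev] with m hm
  have hy := hy_pos m
  have hymu : (0:ℝ) < y m + mu := by linarith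
  have hΓy : 0 < Real.Gamma (y m) := Real.Gamma_pos_of_pos hy
  have hΓymu : 0 < Real.Gamma (y m + mu) := Real.Gamma_pos_of_pos hymu
  set D : ℝ := ((m + k).descFactorial k : ℝ) with hD
  have hD0 : 0 < D := descF_pos k m
  set D' : ℝ := (((m + 1) + k).descFactorial k : ℝ) with hD'
  have hkey : ((m:ℝ) + 1) * D' = ((m:ℝ) + (k:ℝ) + 1) * D := by
    have h1 : (m + k + 1).descFactorial (k + 1) = (m + 1) * (m + k + 1).descFactorial k :=
      by rw [Nat.descFactorial_succ, show m + k + 1 - k = m + 1 by omega]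
    have h2 : (m + k + 1).descFactorial (k + 1) = (m + k + 1) * (m + k).descFactorial k :=
      Nat.succ_descFactorial_succ (m + k) k
    have := h1.symm.trans h2
    rw [hD', hD, show m + 1 + k = m + k + 1 by ring]
    exact_mod_cast congrArg (Nat.cast (R := ℝ)) this
  have hD'le : D' ≤ (k + 1 : ℝ) * D := by
    have hm1 : (0:ℝ) < (m:ℝ) + 1 := by positivity
    rw [← mul_le_mul_iff_right₀ hm1, hkey]
    have hm0 : (0:ℝ) ≤ (m:ℝ) := Nat.cast_nonneg m
    have hk0 : (0:ℝ) ≤ (k:ℝ) := Nat.cast_nonneg k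
    nlinarith [hD0, mul_nonneg (mul_nonneg hm0 hk0) hD0.le]
  -- the Gamma argument for m+1
  have hargm1 : mu * (↑(m+1) + ↑k) + mu = y m + mu := by
    simp only [hy_def]; push_cast; ring
  have hc1 : c mu k (m + 1) = D' / Real.Gamma (y m + mu) := by
    simp only [c, hD']; rw [hargm1]
  have hc0 : c mu k m = D / Real.Gamma (y m) := rfl
  have hga := gautschi hmu0 hmu1 hy
  -- chain of inequalities
  have hstep : c mu k (m + 1) * |r| ≤ 1/2 * c mu k m := by
    have h1 : c mu k (m + 1) * |r| ≤ (k + 1 : ℝ) * D * |r| / Real.Gamma (y m + mu) := by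
      rw [hc1]
      rw [div_mul_eq_mul_div, div_le_div_iff₀ hΓymu hΓymu]
      have : D' * |r| ≤ (k + 1 : ℝ) * D * |r| :=
        mul_le_mul_of_nonneg_right hD'le (abs_nonneg r)
      nlinarith [hΓymu]
    have h2 : (k + 1 : ℝ) * D * |r| / Real.Gamma (y m + mu) ≤
        ((y m + mu) ^ (1 - mu) / y m * Kr) * c mu k m := by
      rw [hc0]
      have hA : (0:ℝ) ≤ (k + 1 : ℝ) * D * |r| := by positivity
      have hinv : 1 / Real.Gamma (y m + mu) ≤
          (y m + mu) ^ (1 - mu) / (y m * Real.Gamma (y m)) := by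
        rw [div_le_div_iff₀ hΓymu (by positivity)]
        nlinarith [hga]
      calc (k + 1 : ℝ) * D * |r| / Real.Gamma (y m + mu)
          = ((k + 1 : ℝ) * D * |r|) * (1 / Real.Gamma (y m + mu)) := by ring
        _ ≤ ((k + 1 : ℝ) * D * |r|) * ((y m + mu) ^ (1 - mu) / (y m * Real.Gamma (y m))) :=
            mul_le_mul_of_nonneg_left hinv hA
        _ = ((y m + mu) ^ (1 - mu) / y m * Kr) * (D / Real.Gamma (y m)) := by
            rw [hKr]; field_simp
    have h3 : ((y m + mu) ^ (1 - mu) / y m * Kr) * c mu k m ≤ 1/2 * c mu k m :=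
      mul_le_mul_of_nonneg_right hm (c_pos hmu0 k m).le
    linarith
  have hcm1 := c_pos hmu0 k (m+1)
  have hcm := c_pos hmu0 k m
  rw [Real.norm_eq_abs, Real.norm_eq_abs, abs_mul, abs_mul, abs_pow, abs_pow,
    abs_of_pos hcm1, abs_of_pos hcm, pow_succ]
  calc c mu k (m + 1) * (|r| ^ m * |r|) = (c mu k (m + 1) * |r|) * |r| ^ m := by ring
    _ ≤ (1/2 * c mu k m) * |r| ^ m := mul_le_mul_of_nonneg_right hstep (by positivity)
    _ = 1/2 * (c mu k m * |r| ^ m) := by ring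

set_option maxHeartbeats 1000000 in
lemma iteratedDeriv_ML {mu : ℝ} (hmu0 : 0 < mu) (hmu1 : mu ≤ 1) (k : ℕ) :
    ∀ x : ℝ, iteratedDeriv k (mittagLefflerFun mu mu) x = ∑' m, c mu k m * x ^ m := by
  induction k with
  | zero =>
    intro x
    rw [iteratedDeriv_zero]
    unfold mittagLefflerFun
    refine tsum_congr fun m => ?_
    simp only [c, Nat.add_zero, Nat.descFactorial_zero, Nat.cast_one]
    rw [one_div, div_eq_mul_inv, mul_comm]
    norm_num
  | succ k ih =>
    intro x
    rw [iteratedDeriv_succ, funext ih]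
    set R : ℝ := |x| + 1 with hR
    have hxR : |x| < R := by rw [hR]; linarith
    have hR0 : 0 < R := lt_of_le_of_lt (abs_nonneg x) hxR
    set u : ℕ → ℝ := fun m => c mu k m * (m * R ^ (m - 1)) with hu_def
    have hu : Summable u := by
      rw [← summable_nat_add_iff 1]
      have : (fun m => u (m + 1)) = fun m => c mu (k + 1) m * R ^ m := by
        funext m
        simp only [hu_def, Nat.add_sub_cancel]
        rw [← c_succ mu k m]
        push_cast
        ring
      rw [this]
      exact summable_c hmu0 hmu1 (k + 1) R
    have hball : x ∈ Metric.ball (0:ℝ) R := by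
      rw [Metric.mem_ball, Real.dist_eq, sub_zero]; exact hxR
    have hder : HasDerivAt (fun z => ∑' m, c mu k m * z ^ m)
        (∑' m, c mu k m * (m * x ^ (m - 1))) x := by
      refine hasDerivAt_tsum_of_isPreconnected (g := fun m z => c mu k m * z ^ m)
        (g' := fun m y => c mu k m * ((m:ℝ) * y ^ (m - 1))) hu Metric.isOpen_ball
        ((convex_ball _ _).isPreconnected) (fun m y _ => ?_) (fun m y hy => ?_) hball
        (summable_c hmu0 hmu1 k x) hball
      · exact (hasDerivAt_pow m y).const_mul (c mu k m)
      · rw [Metric.mem_ball, Real.dist_eq, sub_zero] at hy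
        rw [Real.norm_eq_abs, abs_mul, abs_mul, abs_pow, abs_of_pos (c_pos hmu0 k m),
          Nat.abs_cast]
        have h1 : |y| ^ (m - 1) ≤ R ^ (m - 1) := pow_le_pow_left₀ (abs_nonneg y) hy.le _
        simp only [hu_def]
        exact mul_le_mul_of_nonneg_left
          (mul_le_mul_of_nonneg_left h1 (Nat.cast_nonneg m)) (c_pos hmu0 k m).le
    rw [hder.deriv]
    set T : ℝ := ∑' m, c mu (k + 1) m * x ^ m with hT
    have hS : HasSum (fun m => c mu (k + 1) m * x ^ m) T :=
      (summable_c hmu0 hmu1 (k + 1) x).hasSum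
    have hshift : HasSum (fun m => c mu k m * (m * x ^ (m - 1))) T := by
      have h0 : (fun n => c mu k (n + 1) * ((n + 1 : ℕ) * x ^ (n + 1 - 1)))
          = fun n => c mu (k + 1) n * x ^ n := by
        funext n
        rw [Nat.add_sub_cancel, ← c_succ mu k n]
        push_cast
        ring
      refine (hasSum_nat_add_iff' 1).1 ?_
      rw [Finset.sum_range_one]
      simp only [Nat.cast_zero, zero_mul, mul_zero, sub_zero]
      exact h0 ▸ hS
    exact hshift.tsum_eq

end MLaux

set_option maxHeartbeats 1000000 in
theorem stmt10 (mu lam s : ℝ) (k : ℕ) (hmu0 : 0 < mu) (hmu1 : mu ≤ 1)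
    (hlam : 0 < lam) (hs : lam ^ (1 / mu) < s) :
    ∫ t in Set.Ioi (0 : ℝ),
        Real.exp (-s * t) * t ^ (mu * k + mu - 1) *
          iteratedDeriv k (mittagLefflerFun mu mu) (-lam * t ^ mu)
      = (k.factorial : ℝ) / (s ^ mu + lam) ^ (k + 1) := by
  have hs0 : 0 < s := lt_trans (Real.rpow_pos_of_pos hlam _) hs
  have hsmu : 0 < s ^ mu := Real.rpow_pos_of_pos hs0 mu
  have hlt : lam < s ^ mu := by
    have h1 : (lam ^ (1/mu)) ^ mu < s ^ mu :=
      Real.rpow_lt_rpow (Real.rpow_nonneg hlam.le _) hs hmu0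
    rwa [← Real.rpow_mul hlam.le, one_div_mul_cancel hmu0.ne', Real.rpow_one] at h1
  set p : ℝ := lam / s ^ mu with hp
  have hp0 : 0 < p := div_pos hlam hsmu
  have hp1 : p < 1 := (div_lt_one hsmu).2 hlt
  set a : ℕ → ℝ := fun m => mu * ((m:ℝ) + (k:ℝ)) + mu with ha_def
  have ha : ∀ m, 0 < a m := fun m => MLaux.arg_pos hmu0 k m
  set F : ℕ → ℝ → ℝ := fun m t =>
    (MLaux.c mu k m * (-lam) ^ m) * (t ^ (a m - 1) * Real.exp (-(s * t))) with hF
  -- base facts about 1/s powers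
  have hinvs : (0:ℝ) < 1/s := by positivity
  have hCval : (1/s : ℝ) ^ mu = (s ^ mu)⁻¹ := by
    rw [one_div, Real.inv_rpow hs0.le]
  -- splitting of the exponent
  have hsplit : ∀ m : ℕ, (1/s : ℝ) ^ a m = ((s ^ mu)⁻¹) ^ m * (1/s) ^ (mu * k + mu) := by
    intro m
    rw [show a m = mu * (m:ℝ) + (mu * k + mu) by rw [ha_def]; ring,
      Real.rpow_add hinvs, Real.rpow_mul hinvs.le, Real.rpow_natCast, hCval]
  -- pointwise identity on Ioi 0
  have hpt : ∀ t ∈ Set.Ioi (0:ℝ),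
      Real.exp (-s * t) * t ^ (mu * k + mu - 1) *
        iteratedDeriv k (mittagLefflerFun mu mu) (-lam * t ^ mu) = ∑' m, F m t := by
    intro t ht
    have ht' : (0:ℝ) < t := ht
    rw [MLaux.iteratedDeriv_ML hmu0 hmu1 k, ← tsum_mul_left]
    refine tsum_congr fun m => ?_
    have h1 : (-lam * t ^ mu) ^ m = (-lam) ^ m * t ^ (mu * (m:ℝ)) := by
      rw [mul_pow, ← Real.rpow_natCast (t ^ mu) m, ← Real.rpow_mul ht'.le]
    have h2 : t ^ (mu * (k:ℝ) + mu - 1) * t ^ (mu * (m:ℝ)) = t ^ (a m - 1) := by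
      rw [← Real.rpow_add ht', show mu * (k:ℝ) + mu - 1 + mu * (m:ℝ) = a m - 1 by
        rw [ha_def]; ring]
    simp only [hF]
    rw [h1, ← h2, neg_mul]
    ring
  -- integrability of each term
  have hFint : ∀ m, IntegrableOn (F m) (Set.Ioi (0:ℝ)) := by
    intro m
    have hbase : IntegrableOn (fun t : ℝ => t ^ (a m - 1) * Real.exp (-(s * t)))
        (Set.Ioi (0:ℝ)) := by
      have h := integrableOn_rpow_mul_exp_neg_mul_rpow
        (p := 1) (s := a m - 1) (b := s) (by linarith [ha m]) one_pos hs0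
      refine h.congr_fun (fun t ht => ?_) measurableSet_Ioi
      dsimp only
      rw [Real.rpow_one, neg_mul]
    exact hbase.const_mul _
  -- values of the integrals
  have hFval : ∀ m, ∫ t in Set.Ioi (0:ℝ), F m t
      = (MLaux.c mu k m * (-lam) ^ m) * ((1/s) ^ a m * Real.Gamma (a m)) := by
    intro m
    simp only [hF]
    rw [MeasureTheory.integral_const_mul, integral_rpow_mul_exp_neg_mul_Ioi (ha m) hs0]
  -- c times Gamma
  have hcG : ∀ m, MLaux.c mu k m * Real.Gamma (a m) = ((m + k).descFactorial k : ℝ) := by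
    intro m
    have hG : Real.Gamma (a m) ≠ 0 := (Real.Gamma_pos_of_pos (ha m)).ne'
    rw [MLaux.c]
    push_cast
    rw [ha_def]
    field_simp
  -- norm integrals
  have hFnorm : ∀ m, (∫ t in Set.Ioi (0:ℝ), ‖F m t‖)
      = ((m + k).descFactorial k : ℝ) * p ^ m * (1/s) ^ (mu * k + mu) := by
    intro m
    have habs : ∀ t ∈ Set.Ioi (0:ℝ), ‖F m t‖
        = (MLaux.c mu k m * lam ^ m) * (t ^ (a m - 1) * Real.exp (-(s * t))) := by
      intro t ht
      have ht' : (0:ℝ) < t := ht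
      simp only [hF]
      rw [Real.norm_eq_abs, abs_mul,
        abs_of_nonneg (by positivity : (0:ℝ) ≤ t ^ (a m - 1) * Real.exp (-(s * t))),
        abs_mul, abs_pow, abs_neg, abs_of_pos hlam, abs_of_pos (MLaux.c_pos hmu0 k m)]
    rw [setIntegral_congr_fun measurableSet_Ioi habs, MeasureTheory.integral_const_mul,
      integral_rpow_mul_exp_neg_mul_Ioi (ha m) hs0, hsplit m]
    have heq : MLaux.c mu k m * lam ^ m
          * ((s ^ mu)⁻¹ ^ m * (1/s) ^ (mu * k + mu) * Real.Gamma (a m))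
        = (MLaux.c mu k m * Real.Gamma (a m)) * ((lam / s ^ mu) ^ m)
          * (1/s) ^ (mu * k + mu) := by
      ring
    rw [heq, hcG m]
  -- summability of norm integrals
  have hsum : Summable (fun m => ∫ t in Set.Ioi (0:ℝ), ‖F m t‖) := by
    rw [show (fun m => ∫ t in Set.Ioi (0:ℝ), ‖F m t‖)
        = fun m => (((m + k).descFactorial k : ℝ) * p ^ m) * (1/s) ^ (mu * k + mu) by
      funext m; rw [hFnorm m]]
    apply Summable.mul_right
    have hpnorm : ‖p‖ < 1 := by rw [Real.norm_eq_abs, abs_of_pos hp0]; exact hp1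
    exact summable_descFactorial_mul_geometric_of_norm_lt_one k hpnorm
  -- swap integral and sum
  have hswap : (∫ t in Set.Ioi (0:ℝ),
      Real.exp (-s * t) * t ^ (mu * k + mu - 1) *
        iteratedDeriv k (mittagLefflerFun mu mu) (-lam * t ^ mu))
      = ∑' m, ∫ t in Set.Ioi (0:ℝ), F m t := by
    rw [setIntegral_congr_fun measurableSet_Ioi hpt]
    exact (MeasureTheory.integral_tsum_of_summable_integral_norm hFint hsum).symm
  rw [hswap]
  -- compute the sum
  have hnp : ‖-p‖ < 1 := by rw [norm_neg, Real.norm_eq_abs, abs_of_pos hp0]; exact hp1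
  have hgeo : HasSum (fun m => (((m + k).choose k : ℝ)) * (-p) ^ m)
      (1 / (1 - (-p)) ^ (k + 1)) := hasSum_choose_mul_geometric_of_norm_lt_one k hnp
  have hgeo2 : HasSum (fun m => (k.factorial : ℝ) * ((((m + k).choose k : ℝ)) * (-p) ^ m)
        * (1/s) ^ (mu * k + mu))
      ((k.factorial : ℝ) * (1 / (1 - (-p)) ^ (k + 1)) * (1/s) ^ (mu * k + mu)) :=
    (hgeo.mul_left _).mul_right _
  have hterm : ∀ m, (∫ t in Set.Ioi (0:ℝ), F m t)
      = (k.factorial : ℝ) * ((((m + k).choose k : ℝ)) * (-p) ^ m)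
        * (1/s) ^ (mu * k + mu) := by
    intro m
    rw [hFval m, hsplit m]
    have hdesc : ((m + k).descFactorial k : ℝ)
        = (k.factorial : ℝ) * ((m + k).choose k : ℝ) := by
      exact_mod_cast congrArg (Nat.cast (R := ℝ))
        (Nat.descFactorial_eq_factorial_mul_choose (m+k) k)
    have hnegp : (-lam) ^ m * ((s ^ mu)⁻¹) ^ m = (-p) ^ m := by
      rw [← mul_pow, hp]
      congr 1
      field_simp
    calc MLaux.c mu k m * (-lam) ^ m
          * ((s ^ mu)⁻¹ ^ m * (1/s) ^ (mu * k + mu) * Real.Gamma (a m))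
        = (MLaux.c mu k m * Real.Gamma (a m)) * ((-lam) ^ m * ((s ^ mu)⁻¹) ^ m)
          * (1/s) ^ (mu * k + mu) := by ring
      _ = (k.factorial : ℝ) * ((((m + k).choose k : ℝ)) * (-p) ^ m)
          * (1/s) ^ (mu * k + mu) := by
          rw [hcG m, hdesc, hnegp]; ring
  rw [tsum_congr hterm, hgeo2.tsum_eq]
  -- final algebra
  have h1p : (1:ℝ) - (-p) = (s ^ mu + lam) / s ^ mu := by
    rw [hp]; field_simp; ring
  rw [h1p, show (1/s : ℝ) ^ (mu * k + mu) = ((s ^ mu)⁻¹) ^ (k + 1) by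
    rw [show mu * (k:ℝ) + mu = mu * ((k:ℝ) + 1) by ring, Real.rpow_mul hinvs.le, hCval,
      show ((k:ℝ) + 1) = ((k + 1 : ℕ) : ℝ) by push_cast; ring, Real.rpow_natCast]]
  have hsl : (0:ℝ) < s ^ mu + lam := by linarith
  rw [div_pow]
  field_simp
  ring
  rw [inv_pow, mul_right_comm (s ^ mu), mul_inv_cancel₀ hsmu.ne', one_mul,
    mul_inv_cancel₀ (pow_ne_zero _ hsmu.ne')]
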